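/- Let 𝔇 ⊂ ℝ² be an r-uniformly discrete set, let s > 2, let m_* ∈ ℕ and K > 0, and let {w_{γ,a}}_{γ∈𝔇, 1≤a≤m(γ)} ⊂ L²(ℝ²) with m(γ) ≤ m_* be functions satisfying the pointwise bound |w_{γ,a}(x)| ≤ K ⟨x−γ⟩^{−s} for all x ∈ ℝ². Then for every 0 < ε < s − 2 there exists a constant k_s > 0 (depending on r, s, ε, K, m_*) such that for all γ, η ∈ 𝔇 and i ∈ {1,2}: ∑_{a=1}^{m(γ)} ∑_{b=1}^{m(η)} |⟨w_{γ,a}, (X_i − γ_i) w_{η,b}⟩| ≤ k_s ⟨γ−η⟩^{−(s−2−ε)}, where ⟨w, (X_i − γ_i) v⟩ = ∫_{ℝ²} conj(w(x)) (x_i − γ_i) v(x) dx. -/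

import Mathlib

open MeasureTheory Filter Topology

noncomputable section

abbrev R2 : Type := EuclideanSpace ℝ (Fin 2)

abbrev H2 : Type := MeasureTheory.Lp ℂ 2 (volume : Measure R2)

/-- `T` is an integral operator with kernel `k`. -/
def HasKernel (T : H2 →L[ℂ] H2) (k : R2 → R2 → ℂ) : Prop :=
  ∀ f : H2, ∀ᵐ x : R2 ∂volume, (T f : R2 → ℂ) x = ∫ y : R2, k x y * (f : R2 → ℂ) y

/-- `P` is an orthogonal projection. -/
def IsOrthProj (P : H2 →L[ℂ] H2) : Prop := IsSelfAdjoint P ∧ P ∘L P = P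

/-- `p` is a jointly continuous, exponentially localized kernel with constants `C`, `β`. -/
def IsExpLocKernel (p : R2 → R2 → ℂ) (C β : ℝ) : Prop :=
  Continuous (fun q : R2 × R2 => p q.1 q.2) ∧ 0 < C ∧ 0 < β ∧
    ∀ x y : R2, ‖p x y‖ ≤ C * Real.exp (-β * ‖x - y‖)

/-- Hilbert-Schmidt operators on `L²(ℝ²)`. -/
def IsHilbertSchmidt (T : H2 →L[ℂ] H2) : Prop :=
  ∃ (w : Set H2) (b : HilbertBasis w ℂ H2), Summable fun i => ‖T (b i)‖ ^ 2

/-- Trace class operators, characterized as products of two Hilbert-Schmidt operators. -/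
def IsTraceClass (T : H2 →L[ℂ] H2) : Prop :=
  ∃ A B : H2 →L[ℂ] H2, IsHilbertSchmidt A ∧ IsHilbertSchmidt B ∧ T = A ∘L B

def traceBasisIdx : Set H2 := (exists_hilbertBasis ℂ H2).choose

def traceBasis : HilbertBasis traceBasisIdx ℂ H2 := (exists_hilbertBasis ℂ H2).choose_spec.choose

/-- The trace of an operator, computed in a fixed Hilbert basis of `L²(ℝ²)`.
For trace class operators this is the canonical trace for any choice of basis. -/
def opTrace (T : H2 →L[ℂ] H2) : ℂ :=
  ∑' i : traceBasisIdx, (inner ℂ (traceBasis i) (T (traceBasis i)) : ℂ)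

/-- The square `Λ_L = [-L, L]²` in `ℝ²`. -/
def Lam (L : ℝ) : Set R2 := {x : R2 | |x 0| ≤ L ∧ |x 1| ≤ L}

/-- The characteristic function of `Λ_L`, with values in `ℂ`. -/
def indL (L : ℝ) (x : R2) : ℂ := (Lam L).indicator (fun _ => (1 : ℂ)) x

/-- Formal composition of two integral kernels. -/
def kComp (k₁ k₂ : R2 → R2 → ℂ) : R2 → R2 → ℂ := fun x y => ∫ z : R2, k₁ x z * k₂ z y

/-- The kernel of the commutator `[X_i, P]`, when `P` has kernel `p`. -/
def commK (p : R2 → R2 → ℂ) (i : Fin 2) : R2 → R2 → ℂ :=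
  fun x y => ((x i - y i : ℝ) : ℂ) * p x y

/-- The kernel of the double commutator `[[X₁,P],[X₂,P]]`, when `P` has kernel `p`. -/
def dcommK (p : R2 → R2 → ℂ) : R2 → R2 → ℂ :=
  fun x y => kComp (commK p 0) (commK p 1) x y - kComp (commK p 1) (commK p 0) x y

/-- The kernel of `i χ_{Λ_L} P [[X₁,P],[X₂,P]] P χ_{Λ_L}`, when `P` has kernel `p`. -/
def chernK (p : R2 → R2 → ℂ) (L : ℝ) : R2 → R2 → ℂ :=
  fun x y => indL L x * (Complex.I * kComp p (kComp (dcommK p) p) x y) * indL L y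

/-- A set `𝔇 ⊆ ℝ²` is `r`-uniformly discrete. -/
def UnifDiscrete (𝔇 : Set R2) (r : ℝ) : Prop :=
  0 < r ∧ ∀ x : R2, (𝔇 ∩ Metric.ball x r).Subsingleton

/-- The index set of a generalized Wannier basis. -/
abbrev WIdx (𝔇 : Set R2) (m : R2 → ℕ) : Type := Σ γ : 𝔇, Fin (m (γ : R2))

/-- `w` is a generalized Wannier basis for `P`, `G`-localized around `𝔇`
with localization constant `M` and uniform multiplicity bound `mStar`. -/
def IsGWB (P : H2 →L[ℂ] H2) (𝔇 : Set R2) (m : R2 → ℕ) (mStar : ℕ)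
    (w : (γ : R2) → Fin (m γ) → H2) (G : ℝ → ℝ) (M : ℝ) : Prop :=
  (∀ γ ∈ 𝔇, m γ ≤ mStar) ∧
  Orthonormal ℂ (fun σ : WIdx 𝔇 m => w (σ.1 : R2) σ.2) ∧
  (∀ γ ∈ 𝔇, ∀ a, P (w γ a) = w γ a) ∧
  (∀ f : H2, P f = f → (∀ (γ : R2), γ ∈ 𝔇 → ∀ a, (inner ℂ (w γ a) f : ℂ) = 0) → f = 0) ∧
  (∀ γ ∈ 𝔇, ∀ a, ∫⁻ x : R2,
      (‖(w γ a : R2 → ℂ) x‖₊ : ENNReal) ^ 2 * ENNReal.ofReal (G ‖x - γ‖)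
      ≤ ENNReal.ofReal M)

/-- The Japanese bracket `⟨x⟩ = (1+‖x‖²)^{1/2}` on `ℝ²`. -/
def jap (x : R2) : ℝ := Real.sqrt (1 + ‖x‖ ^ 2)

/-- The Japanese bracket `⟨t⟩ = (1+t²)^{1/2}` on `ℝ`. -/
def japR (t : ℝ) : ℝ := Real.sqrt (1 + t ^ 2)


lemma one_le_jap (x : R2) : 1 ≤ jap x := by
  have h := Real.sqrt_le_sqrt (show (1:ℝ) ≤ 1 + ‖x‖ ^ 2 by nlinarith [sq_nonneg ‖x‖])
  simpa [jap] using h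

lemma jap_pos (x : R2) : 0 < jap x := lt_of_lt_of_le one_pos (one_le_jap x)

lemma norm_le_jap (x : R2) : ‖x‖ ≤ jap x := by
  rw [jap]
  calc ‖x‖ = Real.sqrt (‖x‖ ^ 2) := by rw [Real.sqrt_sq (norm_nonneg x)]
    _ ≤ _ := Real.sqrt_le_sqrt (by linarith)

lemma coord_le_norm (x : R2) (i : Fin 2) : |x i| ≤ ‖x‖ := by
  rw [EuclideanSpace.norm_eq]
  calc |x i| = Real.sqrt (‖x i‖ ^ 2) := by
        rw [Real.norm_eq_abs, Real.sqrt_sq_eq_abs, abs_abs]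
    _ ≤ _ := Real.sqrt_le_sqrt (Finset.single_le_sum (f := fun j => ‖x j‖ ^ 2)
        (fun j _ => by positivity) (Finset.mem_univ i))

lemma peetre (u v x : R2) : jap (u - v) ≤ Real.sqrt 2 * (jap (x - u) * jap (x - v)) := by
  have hc : ‖u - v‖ ≤ ‖x - u‖ + ‖x - v‖ := by
    have h : u - v = (x - v) - (x - u) := by abel
    rw [h]
    calc ‖(x - v) - (x - u)‖ ≤ ‖x - v‖ + ‖x - u‖ := norm_sub_le _ _
      _ = _ := add_comm _ _
  rw [jap, jap, jap, ← Real.sqrt_mul (by positivity), ← Real.sqrt_mul (by norm_num)]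
  refine Real.sqrt_le_sqrt ?_
  have h2 := mul_self_le_mul_self (norm_nonneg (u - v)) hc
  nlinarith [sq_nonneg (‖x - u‖ - ‖x - v‖), sq_nonneg (‖x - u‖ * ‖x - v‖),
    norm_nonneg (x - u), norm_nonneg (x - v)]

lemma peetre_rpow (t : ℝ) (ht : 0 ≤ t) (u v x : R2) :
    jap (x - u) ^ (-t) * jap (x - v) ^ (-t) ≤ Real.sqrt 2 ^ t * jap (u - v) ^ (-t) := by
  have h1 : jap (u - v) ^ t ≤ Real.sqrt 2 ^ t * (jap (x - u) ^ t * jap (x - v) ^ t) := by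
    calc jap (u - v) ^ t ≤ (Real.sqrt 2 * (jap (x - u) * jap (x - v))) ^ t :=
          Real.rpow_le_rpow (le_of_lt (jap_pos _)) (peetre u v x) ht
      _ = _ := by
          rw [Real.mul_rpow (Real.sqrt_nonneg 2)
            (mul_nonneg (le_of_lt (jap_pos _)) (le_of_lt (jap_pos _))),
            Real.mul_rpow (le_of_lt (jap_pos _)) (le_of_lt (jap_pos _))]
  have hA : (0:ℝ) < jap (u - v) ^ t := Real.rpow_pos_of_pos (jap_pos _) _
  have hP : (0:ℝ) < jap (x - u) ^ t * jap (x - v) ^ t := by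
    have := Real.rpow_pos_of_pos (jap_pos (x - u)) t
    have := Real.rpow_pos_of_pos (jap_pos (x - v)) t
    positivity
  rw [Real.rpow_neg (le_of_lt (jap_pos _)), Real.rpow_neg (le_of_lt (jap_pos _)),
    Real.rpow_neg (le_of_lt (jap_pos _)), ← mul_inv]
  have h2 : 1 / (jap (x - u) ^ t * jap (x - v) ^ t) ≤ Real.sqrt 2 ^ t / jap (u - v) ^ t := by
    rw [div_le_div_iff₀ hP hA]
    nlinarith
  simpa [one_div, div_eq_mul_inv] using h2

lemma jap_int (ε : ℝ) (hε : 0 < ε) : Integrable (fun x : R2 => jap x ^ (-(2+ε))) volume := by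
  have h : ((Module.finrank ℝ R2 : ℝ)) < 2 + ε := by
    simp [finrank_euclideanSpace_fin]; linarith
  have h2 := integrable_rpow_neg_one_add_norm_sq (E := R2) (μ := volume) h
  refine h2.congr (Filter.Eventually.of_forall fun x => ?_)
  simp only [jap, Real.sqrt_eq_rpow]
  rw [← Real.rpow_mul (by positivity)]
  congr 1
  ring

/-- off-diagonal matrix element bound. For functions `w_{γ,a}` in `L²(ℝ²)` with
`|w_{γ,a}(x)| ≤ K ⟨x-γ⟩^{-s}`, `s > 2`, and multiplicities bounded by `m_*`, for every
`0 < ε < s-2` there is `k_s > 0` such that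
`∑_{a,b} |⟨w_{γ,a}, (X_i - γ_i) w_{η,b}⟩| ≤ k_s ⟨γ-η⟩^{-(s-2-ε)}` for all `γ, η ∈ 𝔇`. -/
theorem statement_12
    (𝔇 : Set R2) (r : ℝ) (h𝔇 : UnifDiscrete 𝔇 r)
    (s : ℝ) (hs : 2 < s) (mStar : ℕ) (K : ℝ) (hK : 0 < K)
    (m : R2 → ℕ) (hm : ∀ γ ∈ 𝔇, m γ ≤ mStar)
    (w : R2 → ℕ → R2 → ℂ)
    (hL2 : ∀ γ ∈ 𝔇, ∀ a < m γ, MeasureTheory.MemLp (w γ a) 2 volume)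
    (hptw : ∀ γ ∈ 𝔇, ∀ a < m γ, ∀ x : R2,
      ‖w γ a x‖ ≤ K * jap (x - γ) ^ (-s))
    (ε : ℝ) (hε0 : 0 < ε) (hεs : ε < s - 2) :
    ∃ k : ℝ, 0 < k ∧ ∀ γ ∈ 𝔇, ∀ η ∈ 𝔇, ∀ i : Fin 2,
      ∑ a ∈ Finset.range (m γ), ∑ b ∈ Finset.range (m η),
          ‖∫ x : R2,
            (starRingEnd ℂ) (w γ a x) * ((x i - γ i : ℝ) : ℂ) * w η b x‖
        ≤ k * jap (γ - η) ^ (-(s - 2 - ε)) := by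
  set t := s - 2 - ε with ht_def
  have ht0 : 0 < t := by simp only [ht_def]; linarith
  have hI : Integrable (fun x : R2 => jap x ^ (-(2+ε))) volume := jap_int ε hε0
  set I := ∫ x : R2, jap x ^ (-(2+ε)) with hI_def
  have hI0 : 0 ≤ I := integral_nonneg fun x => Real.rpow_nonneg (le_of_lt (jap_pos x)) _
  set C1 := K ^ 2 * Real.sqrt 2 ^ t * I with hC1
  have hC10 : 0 ≤ C1 :=
    mul_nonneg (mul_nonneg (by positivity) (Real.rpow_nonneg (Real.sqrt_nonneg 2) t)) hI0
  have hk0 : 0 < (mStar : ℝ) ^ 2 * C1 + 1 := by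
    have := mul_nonneg (sq_nonneg ((mStar : ℝ))) hC10
    linarith
  refine ⟨(mStar : ℝ) ^ 2 * C1 + 1, hk0, ?_⟩
  intro γ hγ η hη i
  have hjnn : 0 ≤ jap (γ - η) ^ (-t) := Real.rpow_nonneg (le_of_lt (jap_pos _)) _
  have pair : ∀ a < m γ, ∀ b < m η,
      ‖∫ x : R2, (starRingEnd ℂ) (w γ a x) * ((x i - γ i : ℝ) : ℂ) * w η b x‖
        ≤ C1 * jap (γ - η) ^ (-t) := by
    intro a ha b hb
    have hg_int : Integrable (fun x : R2 =>
        K ^ 2 * Real.sqrt 2 ^ t * jap (γ - η) ^ (-t) * jap (x - η) ^ (-(2+ε))) volume :=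
      (hI.comp_sub_right η).const_mul _
    have hpt : ∀ x : R2, ‖(starRingEnd ℂ) (w γ a x) * ((x i - γ i : ℝ) : ℂ) * w η b x‖
        ≤ K ^ 2 * Real.sqrt 2 ^ t * jap (γ - η) ^ (-t) * jap (x - η) ^ (-(2+ε)) := by
      intro x
      have h1 : ‖(starRingEnd ℂ) (w γ a x)‖ ≤ K * jap (x - γ) ^ (-s) := by
        rw [RCLike.norm_conj]
        simpa using hptw γ hγ a ha x
      have h2 : ‖(((x i - γ i : ℝ)) : ℂ)‖ ≤ jap (x - γ) := by
        rw [Complex.norm_real, Real.norm_eq_abs]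
        have he : x i - γ i = (x - γ) i := rfl
        rw [he]
        exact (coord_le_norm _ i).trans (norm_le_jap _)
      have h3 : ‖w η b x‖ ≤ K * jap (x - η) ^ (-s) := by
        simpa using hptw η hη b hb x
      calc ‖(starRingEnd ℂ) (w γ a x) * ((x i - γ i : ℝ) : ℂ) * w η b x‖
          = ‖(starRingEnd ℂ) (w γ a x)‖ * ‖(((x i - γ i : ℝ)) : ℂ)‖ * ‖w η b x‖ := by
            rw [norm_mul, norm_mul]
        _ ≤ (K * jap (x - γ) ^ (-s)) * jap (x - γ) * (K * jap (x - η) ^ (-s)) := by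
            have q1 : 0 ≤ K * jap (x - γ) ^ (-s) :=
              mul_nonneg hK.le (Real.rpow_nonneg (jap_pos _).le _)
            have q2 : 0 ≤ K * jap (x - γ) ^ (-s) * jap (x - γ) :=
              mul_nonneg q1 (jap_pos _).le
            gcongr <;> first | exact q1 | exact q2
        _ = K ^ 2 * (jap (x - γ) ^ (-s) * jap (x - γ)) * jap (x - η) ^ (-s) := by ring
        _ = K ^ 2 * jap (x - γ) ^ (-s + 1) * jap (x - η) ^ (-s) := by
            rw [Real.rpow_add_one (ne_of_gt (jap_pos _))]
        _ ≤ K ^ 2 * jap (x - γ) ^ (-t) * jap (x - η) ^ (-s) := by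
            have hle := Real.rpow_le_rpow_of_exponent_le (one_le_jap (x - γ))
              (show -s + 1 ≤ -t by simp only [ht_def]; linarith)
            have hq : (0:ℝ) ≤ jap (x - η) ^ (-s) := Real.rpow_nonneg (le_of_lt (jap_pos _)) _
            exact mul_le_mul_of_nonneg_right
              (mul_le_mul_of_nonneg_left hle (by positivity)) hq
        _ = K ^ 2 * jap (x - γ) ^ (-t) * (jap (x - η) ^ (-t) * jap (x - η) ^ (-(2+ε))) := by
            rw [← Real.rpow_add (jap_pos _)]
            congr 1
            simp only [ht_def]; ring
        _ = K ^ 2 * (jap (x - γ) ^ (-t) * jap (x - η) ^ (-t)) * jap (x - η) ^ (-(2+ε)) := by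
            ring
        _ ≤ K ^ 2 * (Real.sqrt 2 ^ t * jap (γ - η) ^ (-t)) * jap (x - η) ^ (-(2+ε)) := by
            exact mul_le_mul_of_nonneg_right
              (mul_le_mul_of_nonneg_left (peetre_rpow t ht0.le γ η x) (by positivity))
              (Real.rpow_nonneg (le_of_lt (jap_pos _)) _)
        _ = K ^ 2 * Real.sqrt 2 ^ t * jap (γ - η) ^ (-t) * jap (x - η) ^ (-(2+ε)) := by ring
    calc ‖∫ x : R2, (starRingEnd ℂ) (w γ a x) * ((x i - γ i : ℝ) : ℂ) * w η b x‖
        = ‖∫ x : R2, (starRingEnd ℂ) (w γ a x) * ((x i - γ i : ℝ) : ℂ) * w η b x‖ :=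
          rfl
      _ ≤ ∫ x : R2, K ^ 2 * Real.sqrt 2 ^ t * jap (γ - η) ^ (-t) * jap (x - η) ^ (-(2+ε)) :=
          norm_integral_le_of_norm_le hg_int (Filter.Eventually.of_forall hpt)
      _ = K ^ 2 * Real.sqrt 2 ^ t * jap (γ - η) ^ (-t) * I := by
          rw [MeasureTheory.integral_const_mul,
            MeasureTheory.integral_sub_right_eq_self (fun x : R2 => jap x ^ (-(2+ε))) η]
      _ = C1 * jap (γ - η) ^ (-t) := by rw [hC1]; ring
  calc ∑ a ∈ Finset.range (m γ), ∑ b ∈ Finset.range (m η),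
          ‖∫ x : R2,
            (starRingEnd ℂ) (w γ a x) * ((x i - γ i : ℝ) : ℂ) * w η b x‖
      ≤ ∑ _a ∈ Finset.range (m γ), ∑ _b ∈ Finset.range (m η), C1 * jap (γ - η) ^ (-t) :=
        Finset.sum_le_sum fun a ha => Finset.sum_le_sum fun b hb =>
          pair a (Finset.mem_range.mp ha) b (Finset.mem_range.mp hb)
    _ = (m γ : ℝ) * ((m η : ℝ) * (C1 * jap (γ - η) ^ (-t))) := by
        simp [Finset.sum_const, Finset.card_range, nsmul_eq_mul, mul_assoc]
    _ ≤ (mStar : ℝ) * ((mStar : ℝ) * (C1 * jap (γ - η) ^ (-t))) := by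
        have h1 : (m γ : ℝ) ≤ mStar := Nat.cast_le.mpr (hm γ hγ)
        have h2 : (m η : ℝ) ≤ mStar := Nat.cast_le.mpr (hm η hη)
        have hc : 0 ≤ C1 * jap (γ - η) ^ (-t) := mul_nonneg hC10 hjnn
        exact mul_le_mul h1 (mul_le_mul h2 le_rfl hc (Nat.cast_nonneg _))
          (mul_nonneg (Nat.cast_nonneg _) hc) (Nat.cast_nonneg _)
    _ = (mStar : ℝ) ^ 2 * C1 * jap (γ - η) ^ (-t) := by ring
    _ ≤ ((mStar : ℝ) ^ 2 * C1 + 1) * jap (γ - η) ^ (-t) := by nlinarith [hjnn]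

end
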